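/- Let φ be any composition of finitely many substitutions each equal to c1∘c1 or to c2∘c2. Then the letter 2 does not occur in φ(1) and does not occur in φ(3). Consequently, for any such φ and any i ∈ {1,2}, the letter 2 does not occur in φ(c_i(2)). -/

import Mathlib

/-- Letters `0, 1, 2` stand for the letters `1, 2, 3` of the paper. -/
abbrev Letter := Fin 3

/-- A finite word over the alphabet `{1,2,3}`. -/
abbrev Word := List Letter

/-- Apply a substitution (given by its values on letters) to a finite word. -/
def applySub (σ : Letter → Word) (w : Word) : Word := (w.map σ).flatten

/-- The substitution `c₁ : 1 ↦ 1, 2 ↦ 13, 3 ↦ 2`. -/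
def c1 : Letter → Word := ![[0], [0, 2], [1]]

/-- The substitution `c₂ : 1 ↦ 2, 2 ↦ 13, 3 ↦ 3`. -/
def c2 : Letter → Word := ![[1], [0, 2], [2]]

lemma applySub_cons (σ : Letter → Word) (a : Letter) (t : Word) :
    applySub σ (a :: t) = σ a ++ applySub σ t := by
  simp [applySub]

lemma key (w : Word) (hw : (1 : Letter) ∉ w) :
    (1 : Letter) ∉ applySub c1 (applySub c1 w) ∧
    (1 : Letter) ∉ applySub c2 (applySub c2 w) := by
  induction w with
  | nil => simp [applySub]
  | cons a t ih =>
    have ha : a ≠ 1 := fun h => hw (h ▸ List.mem_cons_self (a := a) (l := t))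
    have ht := ih (fun h => hw (List.mem_cons_of_mem _ h))
    fin_cases a <;> simp_all [applySub_cons, applySub, c1, c2] <;> exact ht

theorem stmt4 (L : List (Word → Word))
    (hL : ∀ f ∈ L, f = applySub c1 ∘ applySub c1 ∨ f = applySub c2 ∘ applySub c2) :
    (1 : Letter) ∉ L.foldr (· ∘ ·) id [0] ∧
    (1 : Letter) ∉ L.foldr (· ∘ ·) id [2] ∧
    ∀ σ : Letter → Word, (σ = c1 ∨ σ = c2) →
      (1 : Letter) ∉ L.foldr (· ∘ ·) id (applySub σ [1]) := by
  have main : ∀ w : Word, (1 : Letter) ∉ w → (1 : Letter) ∉ L.foldr (· ∘ ·) id w := by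
    induction L with
    | nil => intro w hw; simpa using hw
    | cons f T ih =>
      intro w hw
      have hT := ih (fun g hg => hL g (List.mem_cons_of_mem _ hg)) w hw
      have hf := hL f (List.mem_cons_self (a := f) (l := T))
      simp only [List.foldr_cons, Function.comp_apply]
      rcases hf with rfl | rfl
      · exact (key _ hT).1
      · exact (key _ hT).2
  refine ⟨main _ (by decide), main _ (by decide), ?_⟩
  rintro σ (rfl | rfl) <;> exact main _ (by decide)
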